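/- Let m ≥ 1 and let (α₁,β₁), …, (α_m,β_m) be pairs of elements of ZMod d. Applying the generalized Pauli operators U_{α₁,β₁}, …, U_{α_m,β_m} successively to the first qudit of the GHZ state Ψ_{u₁,u₂,u₃} yields c · Ψ_{u₁+Σ_j α_j, u₂+Σ_j β_j, u₃+Σ_j β_j} for some complex number c with |c| = 1. (This is the intermediate claim of the recovery phase: after the participants successively embed their values into the transmitted particle, the GHZ state's indices are shifted by the sums of the embedded values.) -/

import Mathlib

/-- ω = exp(2πi/d), the primitive d-th root of unity used throughout. -/
noncomputable def omega (d : ℕ) : ℂ := Complex.exp (2 * Real.pi * Complex.I / d)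

/-- The generalized three-qudit GHZ state Ψ_{u₁,u₂,u₃}, modeled as a function
`(ZMod d) × (ZMod d) × (ZMod d) → ℂ`. -/
noncomputable def GHZ3 (d : ℕ) (u₁ u₂ u₃ : ZMod d) :
    ZMod d × ZMod d × ZMod d → ℂ := fun p =>
  if p.2.1 = p.1 + u₂ ∧ p.2.2 = p.1 + u₃ then
    (1 / Real.sqrt d : ℂ) * omega d ^ (p.1 * u₁).val
  else 0

/-- The generalized Pauli operator `U_{α,β}` applied to the first qudit:
`f(j₁,j₂,j₃) ↦ ω^{j₁·α} f(j₁+β, j₂, j₃)`. -/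
noncomputable def pauliFst (d : ℕ) (α β : ZMod d)
    (f : ZMod d × ZMod d × ZMod d → ℂ) : ZMod d × ZMod d × ZMod d → ℂ :=
  fun p => omega d ^ (p.1 * α).val * f (p.1 + β, p.2.1, p.2.2)

lemma omega_pow_d (d : ℕ) (hd : d ≠ 0) : omega d ^ d = 1 := by
  rw [omega, ← Complex.exp_nat_mul]
  have h : (d : ℂ) ≠ 0 := Nat.cast_ne_zero.mpr hd
  have : (d : ℂ) * (2 * Real.pi * Complex.I / d) = 2 * Real.pi * Complex.I := by
    field_simp
  rw [this, Complex.exp_two_pi_mul_I]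

lemma abs_omega (d : ℕ) : ‖omega d‖ = 1 := by
  have : (2 * Real.pi * Complex.I / d) = ((2 * Real.pi / d : ℝ) : ℂ) * Complex.I := by
    push_cast; ring
  rw [omega, this, Complex.norm_exp_ofReal_mul_I]

lemma omega_val_add (d : ℕ) (hd : d ≠ 0) (x y : ZMod d) :
    omega d ^ x.val * omega d ^ y.val = omega d ^ (x + y).val := by
  haveI : NeZero d := ⟨hd⟩
  rw [← pow_add, ZMod.val_add, ← pow_eq_pow_mod _ (omega_pow_d d hd)]

lemma pauliFst_GHZ3 (d : ℕ) (hd : d ≠ 0) (a b u₁ u₂ u₃ : ZMod d) :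
    pauliFst d a b (GHZ3 d u₁ u₂ u₃) =
      omega d ^ (b * u₁).val • GHZ3 d (u₁ + a) (u₂ + b) (u₃ + b) := by
  funext p
  simp only [pauliFst, GHZ3, Pi.smul_apply, smul_eq_mul]
  have hc : (p.2.1 = p.1 + b + u₂ ∧ p.2.2 = p.1 + b + u₃) ↔
      (p.2.1 = p.1 + (u₂ + b) ∧ p.2.2 = p.1 + (u₃ + b)) := by
    constructor <;> rintro ⟨h1, h2⟩ <;> exact ⟨by rw [h1]; ring, by rw [h2]; ring⟩
  rw [if_congr hc rfl rfl]
  split_ifs with h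
  · have e1 : omega d ^ (p.1 * a).val * omega d ^ ((p.1 + b) * u₁).val =
        omega d ^ (b * u₁).val * omega d ^ (p.1 * (u₁ + a)).val := by
      rw [omega_val_add d hd, omega_val_add d hd]
      congr 1
      ring
    calc omega d ^ (p.1 * a).val * ((1 / Real.sqrt d : ℂ) * omega d ^ ((p.1 + b) * u₁).val)
        = (1 / Real.sqrt d : ℂ) * (omega d ^ (p.1 * a).val * omega d ^ ((p.1 + b) * u₁).val) := by ring
      _ = (1 / Real.sqrt d : ℂ) * (omega d ^ (b * u₁).val * omega d ^ (p.1 * (u₁ + a)).val) := by rw [e1]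
      _ = omega d ^ (b * u₁).val * ((1 / Real.sqrt d : ℂ) * omega d ^ (p.1 * (u₁ + a)).val) := by ring
  · simp

lemma pauliFst_smul (d : ℕ) (a b : ZMod d) (c : ℂ) (f : ZMod d × ZMod d × ZMod d → ℂ) :
    pauliFst d a b (c • f) = c • pauliFst d a b f := by
  funext p
  simp [pauliFst, mul_left_comm]

lemma foldl_pauliFst_smul (d : ℕ) {m : ℕ} (α β : Fin m → ZMod d) :
    ∀ (l : List (Fin m)) (c : ℂ) (f : ZMod d × ZMod d × ZMod d → ℂ),
      l.foldl (fun f j => pauliFst d (α j) (β j) f) (c • f) =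
        c • l.foldl (fun f j => pauliFst d (α j) (β j) f) f
  | [], c, f => rfl
  | j :: l, c, f => by
      rw [List.foldl_cons, List.foldl_cons, pauliFst_smul,
        foldl_pauliFst_smul d α β l c]

lemma foldl_pauliFst_GHZ3 (d : ℕ) (hd : d ≠ 0) {m : ℕ} (α β : Fin m → ZMod d) :
    ∀ (l : List (Fin m)) (u₁ u₂ u₃ : ZMod d),
      ∃ c : ℂ, ‖c‖ = 1 ∧
        l.foldl (fun f j => pauliFst d (α j) (β j) f) (GHZ3 d u₁ u₂ u₃) =
          c • GHZ3 d (u₁ + (l.map α).sum) (u₂ + (l.map β).sum) (u₃ + (l.map β).sum)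
  | [], u₁, u₂, u₃ => ⟨1, by simp⟩
  | j :: l, u₁, u₂, u₃ => by
      obtain ⟨c, hc, h⟩ := foldl_pauliFst_GHZ3 d hd α β l (u₁ + α j) (u₂ + β j) (u₃ + β j)
      refine ⟨omega d ^ (β j * u₁).val * c, ?_, ?_⟩
      · rw [norm_mul, hc, norm_pow, abs_omega]; simp
      · rw [List.foldl_cons, pauliFst_GHZ3 d hd, foldl_pauliFst_smul, h, smul_smul]
        congr 2 <;> simp <;> ring

/-- Applying the generalized Pauli operators `U_{α₁,β₁}, …, U_{α_m,β_m}` successively to the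
first qudit of the GHZ state `Ψ_{u₁,u₂,u₃}` yields
`c • Ψ_{u₁+Σ α_j, u₂+Σ β_j, u₃+Σ β_j}` for some complex number `c` with `|c| = 1`. -/
theorem pauliFst_iterate_GHZ3 (d : ℕ) (hd : 2 ≤ d) (m : ℕ) (hm : 1 ≤ m)
    (α β : Fin m → ZMod d) (u₁ u₂ u₃ : ZMod d) :
    ∃ c : ℂ, ‖c‖ = 1 ∧
      (List.finRange m).foldl (fun f j => pauliFst d (α j) (β j) f) (GHZ3 d u₁ u₂ u₃) =
        c • GHZ3 d (u₁ + ∑ j, α j) (u₂ + ∑ j, β j) (u₃ + ∑ j, β j) := by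
  have hd0 : d ≠ 0 := by omega
  obtain ⟨c, hc, h⟩ := foldl_pauliFst_GHZ3 d hd0 α β (List.finRange m) u₁ u₂ u₃
  exact ⟨c, hc, by rw [h, ← Fin.sum_univ_def, ← Fin.sum_univ_def]⟩
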